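/- Every 2-connected [4,2]-graph of order at least 7 contains a triangle. -/

import Mathlib

open SimpleGraph

/-- A graph `G` is an `[s,t]`-graph if every induced subgraph of order `s` has at least
`t` edges. -/
def IsSTGraph {V : Type*} [Fintype V] [DecidableEq V] (G : SimpleGraph V) [DecidableRel G.Adj]
    (s t : ℕ) : Prop :=
  ∀ S : Finset V, S.card = s → t ≤ (G.induce (S : Set V)).edgeFinset.card


/-- A graph is `k`-connected if it has more than `k` vertices and removing any set of fewer
than `k` vertices leaves a connected graph. -/
def IsKConnected {V : Type*} [Fintype V] (G : SimpleGraph V) (k : ℕ) : Prop :=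
  k < Fintype.card V ∧ ∀ S : Finset V, S.card < k → (G.induce ((↑S : Set V)ᶜ)).Connected

lemma edge_card_le_one {V : Type*} [Fintype V] [DecidableEq V] (G : SimpleGraph V)
    [DecidableRel G.Adj] (S : Finset V) (x y : V)
    (h : ∀ u v : V, u ∈ S → v ∈ S → G.Adj u v → (u = x ∧ v = y) ∨ (u = y ∧ v = x)) :
    (G.induce (S : Set V)).edgeFinset.card ≤ 1 := by
  classical
  rw [Finset.card_le_one]
  intro e he f hf
  rw [mem_edgeFinset] at he hf
  induction e using Sym2.ind with | _ u v =>
  induction f using Sym2.ind with | _ p q =>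
  rw [mem_edgeSet] at he hf
  have hu := h u v u.2 v.2 he
  have hp := h p q p.2 q.2 hf
  rcases hu with ⟨h1,h2⟩|⟨h1,h2⟩ <;> rcases hp with ⟨h3,h4⟩|⟨h3,h4⟩
  · rw [Subtype.ext (h1.trans h3.symm), Subtype.ext (h2.trans h4.symm)]
  · rw [Subtype.ext (h1.trans h4.symm), Subtype.ext (h2.trans h3.symm), Sym2.eq_swap]
  · rw [Subtype.ext (h1.trans h4.symm), Subtype.ext (h2.trans h3.symm), Sym2.eq_swap]
  · rw [Subtype.ext (h1.trans h3.symm), Subtype.ext (h2.trans h4.symm)]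

lemma key42 {V : Type*} [Fintype V] [DecidableEq V] (G : SimpleGraph V) [DecidableRel G.Adj]
    (hst : IsSTGraph G 4 2) (a b c d : V)
    (hab : a ≠ b) (hac : a ≠ c) (had : a ≠ d) (hbc : b ≠ c) (hbd : b ≠ d) (hcd : c ≠ d)
    (nab : ¬G.Adj a b) (nac : ¬G.Adj a c) (nad : ¬G.Adj a d) (nbc : ¬G.Adj b c) :
    G.Adj b d ∧ G.Adj c d := by
  classical
  have hS : ({a,b,c,d} : Finset V).card = 4 := by
    rw [Finset.card_insert_of_notMem (by simp [hab, hac, had]),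
      Finset.card_insert_of_notMem (by simp [hbc, hbd]),
      Finset.card_insert_of_notMem (by simp [hcd]), Finset.card_singleton]
  have h2 := hst {a,b,c,d} hS
  by_contra hcon
  rw [not_and_or] at hcon
  have hle : (G.induce (({a,b,c,d} : Finset V) : Set V)).edgeFinset.card ≤ 1 := by
    rcases hcon with hnbd | hncd
    · apply edge_card_le_one G _ c d
      intro u v hu hv huv
      simp only [Finset.mem_insert, Finset.mem_singleton] at hu hv
      rcases hu with rfl|rfl|rfl|rfl <;> rcases hv with rfl|rfl|rfl|rfl <;>
        first
          | exact absurd huv G.irrefl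
          | exact absurd huv nab | exact absurd huv.symm nab
          | exact absurd huv nac | exact absurd huv.symm nac
          | exact absurd huv nad | exact absurd huv.symm nad
          | exact absurd huv nbc | exact absurd huv.symm nbc
          | exact absurd huv hnbd | exact absurd huv.symm hnbd
          | exact Or.inl ⟨rfl, rfl⟩ | exact Or.inr ⟨rfl, rfl⟩
    · apply edge_card_le_one G _ b d
      intro u v hu hv huv
      simp only [Finset.mem_insert, Finset.mem_singleton] at hu hv
      rcases hu with rfl|rfl|rfl|rfl <;> rcases hv with rfl|rfl|rfl|rfl <;>
        first
          | exact absurd huv G.irrefl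
          | exact absurd huv nab | exact absurd huv.symm nab
          | exact absurd huv nac | exact absurd huv.symm nac
          | exact absurd huv nad | exact absurd huv.symm nad
          | exact absurd huv nbc | exact absurd huv.symm nbc
          | exact absurd huv hncd | exact absurd huv.symm hncd
          | exact Or.inl ⟨rfl, rfl⟩ | exact Or.inr ⟨rfl, rfl⟩
  omega

lemma exists_four_distinct {V : Type*} [DecidableEq V] (s : Finset V) (h : 4 ≤ s.card) :
    ∃ a b c d, a ∈ s ∧ b ∈ s ∧ c ∈ s ∧ d ∈ s ∧
      a ≠ b ∧ a ≠ c ∧ a ≠ d ∧ b ≠ c ∧ b ≠ d ∧ c ≠ d := by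
  obtain ⟨a, ha⟩ := Finset.card_pos.mp (show 0 < s.card by omega)
  have h1 : 3 ≤ (s.erase a).card := by rw [Finset.card_erase_of_mem ha]; omega
  obtain ⟨b, hb⟩ := Finset.card_pos.mp (show 0 < (s.erase a).card by omega)
  have h2 : 2 ≤ ((s.erase a).erase b).card := by rw [Finset.card_erase_of_mem hb]; omega
  obtain ⟨c, hc⟩ := Finset.card_pos.mp (show 0 < ((s.erase a).erase b).card by omega)
  have h3 : 1 ≤ (((s.erase a).erase b).erase c).card := by
    rw [Finset.card_erase_of_mem hc]; omega
  obtain ⟨d, hd⟩ := Finset.card_pos.mp (show 0 < (((s.erase a).erase b).erase c).card by omega)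
  simp only [Finset.mem_erase] at hb hc hd
  exact ⟨a, b, c, d, ha, hb.2, hc.2.2, hd.2.2.2, (hb.1).symm, (hc.2.1).symm, (hd.2.2.1).symm,
    (hc.1).symm, (hd.2.1).symm, (hd.1).symm⟩

lemma exists_adj_of_walk {W : Type*} {H : SimpleGraph W} {u w : W} (p : H.Walk u w)
    (h : u ≠ w) : ∃ z, H.Adj u z := by
  cases p with
  | nil => exact absurd rfl h
  | cons h' _ => exact ⟨_, h'⟩

/-- every 2-connected `[4,2]`-graph of order at least 7 contains a triangle. -/
theorem two_connected_42_graph_has_triangle {V : Type*} [Fintype V] [DecidableEq V]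
    (G : SimpleGraph V) [DecidableRel G.Adj]
    (horder : 7 ≤ Fintype.card V) (hconn : IsKConnected G 2) (hst : IsSTGraph G 4 2) :
    ∃ t : Finset V, G.IsNClique 3 t := by
  by_contra hno
  push_neg at hno
  have tf : ∀ x y z : V, G.Adj x y → G.Adj x z → G.Adj y z → False := by
    intro x y z h1 h2 h3
    exact hno {x,y,z} (is3Clique_triple_iff.mpr ⟨h1, h2, h3⟩)
  -- every vertex has a neighbor
  have hnbr : ∀ v : V, ∃ a, G.Adj v a := by
    intro v
    have hc := hconn.2 ∅ (by simp)
    obtain ⟨x, hx⟩ := Fintype.exists_ne_of_one_lt_card (by omega) v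
    have hv' : v ∈ ((↑(∅ : Finset V) : Set V)ᶜ) := by simp
    have hx' : x ∈ ((↑(∅ : Finset V) : Set V)ᶜ) := by simp
    have hne : (⟨v, hv'⟩ : ↥((↑(∅ : Finset V) : Set V)ᶜ)) ≠ ⟨x, hx'⟩ :=
      fun h => hx ((congrArg Subtype.val h).symm)
    obtain ⟨p⟩ := hc.preconnected ⟨v, hv'⟩ ⟨x, hx'⟩
    obtain ⟨z, hz⟩ := exists_adj_of_walk p hne
    exact ⟨z.val, by simpa using hz⟩
  -- no vertex has 4 distinct neighbors
  have L1 : ∀ v a b c d : V, G.Adj v a → G.Adj v b → G.Adj v c → G.Adj v d →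
      a ≠ b → a ≠ c → a ≠ d → b ≠ c → b ≠ d → c ≠ d → False := by
    intro v a b c d h1 h2 h3 h4 hab hac had hbc hbd hcd
    have nab : ¬G.Adj a b := fun h => tf v a b h1 h2 h
    have nac : ¬G.Adj a c := fun h => tf v a c h1 h3 h
    have nad : ¬G.Adj a d := fun h => tf v a d h1 h4 h
    have nbc : ¬G.Adj b c := fun h => tf v b c h2 h3 h
    have nbd : ¬G.Adj b d := fun h => tf v b d h2 h4 h
    exact nbd (key42 G hst a b c d hab hac had hbc hbd hcd nab nac nad nbc).1
  -- no vertex has 4 distinct non-neighbors (special case: w,y non-adjacent)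
  have L2' : ∀ v w x y z : V, v ≠ w → v ≠ x → v ≠ y → v ≠ z → w ≠ x → w ≠ y → w ≠ z →
      x ≠ y → x ≠ z → y ≠ z → ¬G.Adj v w → ¬G.Adj v x → ¬G.Adj v y → ¬G.Adj v z →
      ¬G.Adj w y → False := by
    intro v w x y z hvw hvx hvy hvz hwx hwy hwz hxy hxz hyz nvw nvx nvy nvz nwy
    obtain ⟨awx, ayx⟩ := key42 G hst v w y x hvw hvy hvx hwy hwx hxy.symm nvw nvy nvx nwy
    obtain ⟨awz, ayz⟩ := key42 G hst v w y z hvw hvy hvz hwy hwz hyz nvw nvy nvz nwy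
    have nxz : ¬G.Adj x z := fun h => tf w x z awx awz h
    obtain ⟨a, hva⟩ := hnbr v
    have hav : v ≠ a := G.ne_of_adj hva
    have haw : a ≠ w := fun h => nvw (h ▸ hva)
    have hax : a ≠ x := fun h => nvx (h ▸ hva)
    have hay : a ≠ y := fun h => nvy (h ▸ hva)
    have haz : a ≠ z := fun h => nvz (h ▸ hva)
    have h1 : G.Adj a x ∨ G.Adj a z := by
      by_contra hcon
      push_neg at hcon
      have := key42 G hst x z v a hxz hvx.symm hax.symm hvz.symm haz.symm hav
        nxz (fun h => nvx h.symm) (fun h => hcon.1 h.symm) (fun h => nvz h.symm)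
      exact hcon.2 this.1.symm
    have h2 : G.Adj a w ∨ G.Adj a y := by
      by_contra hcon
      push_neg at hcon
      have := key42 G hst w y v a hwy hvw.symm haw.symm hvy.symm hay.symm hav
        nwy (fun h => nvw h.symm) (fun h => hcon.1 h.symm) (fun h => nvy h.symm)
      exact hcon.2 this.1.symm
    rcases h1 with h1|h1 <;> rcases h2 with h2|h2
    · exact tf a x w h1 h2 awx.symm
    · exact tf a x y h1 h2 ayx.symm
    · exact tf a z w h1 h2 awz.symm
    · exact tf a z y h1 h2 ayz.symm
  have L2 : ∀ v w x y z : V, v ≠ w → v ≠ x → v ≠ y → v ≠ z → w ≠ x → w ≠ y → w ≠ z →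
      x ≠ y → x ≠ z → y ≠ z → ¬G.Adj v w → ¬G.Adj v x → ¬G.Adj v y → ¬G.Adj v z →
      False := by
    intro v w x y z hvw hvx hvy hvz hwx hwy hwz hxy hxz hyz nvw nvx nvy nvz
    by_cases c1 : G.Adj w x
    · by_cases c2 : G.Adj w y
      · by_cases c3 : G.Adj x y
        · exact tf w x y c1 c2 c3
        · exact L2' v x w y z hvx hvw hvy hvz hwx.symm hxy hxz hwy hwz hyz
            nvx nvw nvy nvz c3
      · exact L2' v w x y z hvw hvx hvy hvz hwx hwy hwz hxy hxz hyz
          nvw nvx nvy nvz c2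
    · exact L2' v w y x z hvw hvy hvx hvz hwy hwx hwz hxy.symm hyz hxz
        nvw nvy nvx nvz c1
  -- degrees are exactly 3 and |V| = 7
  have key : ∀ v : V, (G.neighborFinset v).card = 3 ∧ Fintype.card V = 7 := by
    intro v
    have hN : (G.neighborFinset v).card ≤ 3 := by
      by_contra hh
      push_neg at hh
      obtain ⟨a, b, c, d, ha, hb, hc, hd, hab, hac, had, hbc, hbd, hcd⟩ :=
        exists_four_distinct _ (show 4 ≤ (G.neighborFinset v).card by omega)
      rw [mem_neighborFinset] at ha hb hc hd
      exact L1 v a b c d ha hb hc hd hab hac had hbc hbd hcd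
    have hM : (Finset.univ \ insert v (G.neighborFinset v)).card ≤ 3 := by
      by_contra hh
      push_neg at hh
      obtain ⟨a, b, c, d, ha, hb, hc, hd, hab, hac, had, hbc, hbd, hcd⟩ :=
        exists_four_distinct _
          (show 4 ≤ (Finset.univ \ insert v (G.neighborFinset v)).card by omega)
      simp only [Finset.mem_sdiff, Finset.mem_insert, mem_neighborFinset, not_or] at ha hb hc hd
      exact L2 v a b c d (fun h => ha.2.1 h.symm) (fun h => hb.2.1 h.symm)
        (fun h => hc.2.1 h.symm) (fun h => hd.2.1 h.symm) hab hac had hbc hbd hcd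
        ha.2.2 hb.2.2 hc.2.2 hd.2.2
    have hins : (insert v (G.neighborFinset v)).card = (G.neighborFinset v).card + 1 :=
      Finset.card_insert_of_notMem (by simp)
    have hsd := Finset.card_sdiff_of_subset (Finset.subset_univ (insert v (G.neighborFinset v)))
    have hle := Finset.card_le_univ (insert v (G.neighborFinset v))
    rw [Finset.card_univ] at hsd
    omega
  obtain ⟨v0⟩ := Fintype.card_pos_iff.mp (show 0 < Fintype.card V by omega)
  have hcard : Fintype.card V = 7 := (key v0).2
  have hdeg : ∀ v : V, G.degree v = 3 := fun v => (key v).1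
  have hs := G.sum_degrees_eq_twice_card_edges
  rw [Finset.sum_congr rfl (fun v _ => hdeg v), Finset.sum_const, Finset.card_univ,
    hcard, smul_eq_mul] at hs
  omega
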